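/- Let T be a bounded operator with closed range on a complex Hilbert space and T = U_T − V its polar proper splitting. Then the following are equivalent: (i) ρ(U_T* V) < 1; (ii) ‖U_T − T‖ < 1; (iii) ‖P_{T*} − |T|‖ < 1; (iv) ‖T‖ < 2. -/

import Mathlib

open ContinuousLinearMap
open scoped InnerProductSpace

/-- `Td` is the Moore–Penrose inverse of `T`. -/
def IsMoorePenroseInverse {H : Type*} [NormedAddCommGroup H] [InnerProductSpace ℂ H]
    [CompleteSpace H] (T Td : H →L[ℂ] H) : Prop :=
  T ∘L Td ∘L T = T ∧ Td ∘L T ∘L Td = Td ∧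
    IsSelfAdjoint (T ∘L Td) ∧ IsSelfAdjoint (Td ∘L T)
section Aux

variable {H : Type*} [NormedAddCommGroup H] [InnerProductSpace ℂ H] [CompleteSpace H]

lemma sa_swap (A : H →L[ℂ] H) (hA : IsSelfAdjoint A) (x y : H) :
    ⟪A x, y⟫_ℂ = ⟪x, A y⟫_ℂ := by
  conv_lhs => rw [← isSelfAdjoint_iff'.mp hA]
  rw [adjoint_inner_left]

lemma proj_fix (A : H →L[ℂ] H) (hA : IsSelfAdjoint A) (hA2 : A ∘L A = A)
    {b : H} (hb : b ∈ (LinearMap.ker (A : H →ₗ[ℂ] H))ᗮ) : A b = b := by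
  have hmem : b - A b ∈ LinearMap.ker (A : H →ₗ[ℂ] H) := by
    have h : A (A b) = A b := by
      have := congrArg (fun S : H →L[ℂ] H => S b) hA2
      simpa using this
    simp [LinearMap.mem_ker, map_sub, h]
  have h1 : ⟪b - A b, b⟫_ℂ = 0 := hb _ hmem
  have h2 : ⟪b - A b, A b⟫_ℂ = 0 := by
    rw [← sa_swap A hA, show A (b - A b) = 0 from LinearMap.mem_ker.mp hmem, inner_zero_left]
  have h3 : ⟪b - A b, b - A b⟫_ℂ = 0 := by
    rw [inner_sub_right, h1, h2, sub_zero]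
  exact (sub_eq_zero.mp (inner_self_eq_zero.mp h3)).symm

lemma proj_unique (A B : H →L[ℂ] H) (hA : IsSelfAdjoint A) (hA2 : A ∘L A = A)
    (hB : IsSelfAdjoint B) (hB2 : B ∘L B = B)
    (hker : LinearMap.ker (A : H →ₗ[ℂ] H) = LinearMap.ker (B : H →ₗ[ℂ] H)) : A = B := by
  ext x
  haveI : CompleteSpace (LinearMap.ker (A : H →ₗ[ℂ] H)) := (isClosed_ker A).completeSpace_coe
  obtain ⟨a, ha, b, hb, rfl⟩ := (LinearMap.ker (A : H →ₗ[ℂ] H)).exists_add_mem_mem_orthogonal x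
  have hAb : A b = b := proj_fix A hA hA2 hb
  have hBb : B b = b := proj_fix B hB hB2 (hker ▸ hb)
  have ha1 : A a = 0 := LinearMap.mem_ker.mp ha
  have ha2 : B a = 0 := LinearMap.mem_ker.mp (hker ▸ ha)
  simp only [coe_coe, map_add, LinearMap.mem_ker.mp ha, ha1, ha2,
    LinearMap.mem_ker.mp (hker ▸ ha), hAb, hBb, zero_add]

lemma bdd_below_of_closed_range (T : H →L[ℂ] H)
    (hTcr : IsClosed (LinearMap.range (T : H →ₗ[ℂ] H) : Set H)) :
    ∃ C : ℝ, 0 < C ∧ ∀ b ∈ (LinearMap.ker (T : H →ₗ[ℂ] H))ᗮ, ‖b‖ ≤ C * ‖T b‖ := by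
  set K : Submodule ℂ H := (LinearMap.ker (T : H →ₗ[ℂ] H))ᗮ with hK
  set M : Submodule ℂ H := LinearMap.range (T : H →ₗ[ℂ] H) with hM
  haveI : CompleteSpace M := hTcr.completeSpace_coe
  haveI : CompleteSpace K := ((LinearMap.ker (T : H →ₗ[ℂ] H)).isClosed_orthogonal).completeSpace_coe
  haveI : CompleteSpace (LinearMap.ker (T : H →ₗ[ℂ] H)) := (isClosed_ker T).completeSpace_coe
  set S : K →L[ℂ] M :=
    (T.comp K.subtypeL).codRestrict M (fun x => LinearMap.mem_range_self _ _) with hS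
  have hSval : ∀ x : K, (S x : H) = T x := fun x => rfl
  have hinj : LinearMap.ker (S : K →ₗ[ℂ] M) = ⊥ := by
    rw [Submodule.eq_bot_iff]
    rintro ⟨x, hx⟩ hx0
    have hTx : T x = 0 := by
      have : (S ⟨x, hx⟩ : H) = 0 := by rw [show S ⟨x, hx⟩ = 0 from LinearMap.mem_ker.mp hx0]; rfl
      rwa [hSval] at this
    have : ⟪x, x⟫_ℂ = 0 := hx x hTx
    simpa using inner_self_eq_zero.mp this
  have hsurj : LinearMap.range (S : K →ₗ[ℂ] M) = ⊤ := by
    rw [Submodule.eq_top_iff']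
    rintro ⟨v, hv⟩
    obtain ⟨y, hy⟩ := hv
    obtain ⟨a, ha, b, hb, rfl⟩ := (LinearMap.ker (T : H →ₗ[ℂ] H)).exists_add_mem_mem_orthogonal y
    refine ⟨⟨b, hb⟩, ?_⟩
    apply Subtype.ext
    show T b = v
    rw [← hy]
    simp [show T a = 0 from LinearMap.mem_ker.mp ha]
  set e := ContinuousLinearEquiv.ofBijective S hinj hsurj with he
  refine ⟨‖(e.symm : M →L[ℂ] K)‖ + 1, by positivity, fun b hb => ?_⟩
  have h1 : e.symm (S ⟨b, hb⟩) = ⟨b, hb⟩ :=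
    ContinuousLinearEquiv.ofBijective_symm_apply_apply S hinj hsurj ⟨b, hb⟩
  have h2 : ‖e.symm (S ⟨b, hb⟩)‖ ≤ ‖(e.symm : M →L[ℂ] K)‖ * ‖S ⟨b, hb⟩‖ :=
    (e.symm : M →L[ℂ] K).le_opNorm _
  rw [h1] at h2
  have h3 : ‖(⟨b, hb⟩ : K)‖ = ‖b‖ := rfl
  have h4 : ‖S ⟨b, hb⟩‖ = ‖T b‖ := rfl
  rw [h3, h4] at h2
  nlinarith [norm_nonneg (T b), norm_nonneg ((e.symm : M →L[ℂ] K))]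

end Aux

set_option maxHeartbeats 1600000 in
/-- Convergence of the polar proper splitting of `T`: the conditions
`ρ(U_T* V) < 1`, `‖U_T - T‖ < 1`, `‖P_{T*} - |T|‖ < 1` and `‖T‖ < 2` are
all equivalent. -/
theorem polar_splitting_convergence_tfae
    {H : Type*} [NormedAddCommGroup H] [InnerProductSpace ℂ H] [CompleteSpace H]
    (T UT R P : H →L[ℂ] H)
    (hTcr : IsClosed (LinearMap.range (T : H →ₗ[ℂ] H) : Set H))
    (hR : R.IsPositive) (hR2 : R ∘L R = adjoint T ∘L T)
    (hpolar : T = UT ∘L R)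
    (hpi : UT ∘L adjoint UT ∘L UT = UT)
    (hkerU : LinearMap.ker (UT : H →ₗ[ℂ] H) = LinearMap.ker (T : H →ₗ[ℂ] H))
    (hP : IsSelfAdjoint P) (hP2 : P ∘L P = P)
    (hPran : LinearMap.range (P : H →ₗ[ℂ] H) = LinearMap.range ((adjoint T : H →L[ℂ] H) : H →ₗ[ℂ] H)) :
    [spectralRadius ℂ (adjoint UT ∘L (UT - T)) < 1,
      ‖UT - T‖ < 1,
      ‖P - R‖ < 1,
      ‖T‖ < 2].TFAE := by
  have hRsa : IsSelfAdjoint R := hR.isSelfAdjoint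
  -- ‖R x‖ = ‖T x‖
  have hRT : ∀ x, ‖R x‖ = ‖T x‖ := by
    intro x
    have h : ⟪R x, R x⟫_ℂ = ⟪T x, T x⟫_ℂ := by
      rw [sa_swap R hRsa,
        show R (R x) = (adjoint T) (T x) from by
          simpa using congrArg (fun S : H →L[ℂ] H => S x) hR2,
        adjoint_inner_right]
    have h' : ‖R x‖ ^ 2 = ‖T x‖ ^ 2 := by
      have := congrArg (fun z : ℂ => RCLike.re z) h
      rwa [inner_self_eq_norm_sq, inner_self_eq_norm_sq] at this
    rw [← Real.sqrt_sq (norm_nonneg (R x)), h', Real.sqrt_sq (norm_nonneg (T x))]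
  -- kernels
  have hkerTR : ∀ x, T x = 0 → R x = 0 := fun x h => by
    have := hRT x
    rw [h, norm_zero, norm_eq_zero] at this
    exact this
  have hkerP : LinearMap.ker (P : H →ₗ[ℂ] H) = LinearMap.ker (T : H →ₗ[ℂ] H) := by
    ext x
    simp only [LinearMap.mem_ker]
    constructor
    · intro h
      have hx : ⟪T x, T x⟫_ℂ = 0 := by
        obtain ⟨z, hz⟩ : (adjoint T) (T x) ∈ LinearMap.range (P : H →ₗ[ℂ] H) :=
          hPran ▸ LinearMap.mem_range_self _ _
        rw [← adjoint_inner_right, ← (show P z = adjoint T (T x) from hz), ← sa_swap P hP,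
          show P x = 0 from h, inner_zero_left]
      exact inner_self_eq_zero.mp hx
    · intro h
      obtain ⟨y, hy⟩ : P x ∈ LinearMap.range ((adjoint T : H →L[ℂ] H) : H →ₗ[ℂ] H) := hPran ▸ LinearMap.mem_range_self _ _
      have hx : ⟪P x, P x⟫_ℂ = 0 := by
        calc ⟪P x, P x⟫_ℂ = ⟪x, P (P x)⟫_ℂ := sa_swap P hP x (P x)
          _ = ⟪x, P x⟫_ℂ := by
              rw [show P (P x) = P x from by
                simpa using congrArg (fun S : H →L[ℂ] H => S x) hP2]
          _ = 0 := by rw [← (show adjoint T y = P x from hy), adjoint_inner_right, show T x = 0 from h,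
            inner_zero_left]
      exact inner_self_eq_zero.mp hx
  -- Q := UT† UT is the projection P
  have hQsa : IsSelfAdjoint (adjoint UT ∘L UT) := by
    rw [isSelfAdjoint_iff', adjoint_comp, adjoint_adjoint]
  have hQ2 : (adjoint UT ∘L UT) ∘L (adjoint UT ∘L UT) = adjoint UT ∘L UT := by
    rw [comp_assoc, hpi]
  have hkerQ : LinearMap.ker ((adjoint UT ∘L UT : H →L[ℂ] H) : H →ₗ[ℂ] H) = LinearMap.ker (T : H →ₗ[ℂ] H) := by
    ext x
    simp only [LinearMap.mem_ker, comp_apply]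
    constructor
    · intro h
      have hx : ⟪UT x, UT x⟫_ℂ = 0 := by
        rw [← adjoint_inner_left, show (adjoint UT) (UT x) = 0 from h, inner_zero_left]
      have := inner_self_eq_zero.mp hx
      rw [← LinearMap.mem_ker, ← hkerU, LinearMap.mem_ker]
      exact this
    · intro h
      have : UT x = 0 := by
        rw [← LinearMap.mem_ker] at h
        rw [← hkerU] at h
        exact h
      show (adjoint UT) (UT x) = 0
      rw [this, map_zero]
  have hQP : adjoint UT ∘L UT = P :=
    proj_unique _ P hQsa hQ2 hP hP2 (hkerQ.trans hkerP.symm)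
  -- ‖UT x‖ = ‖P x‖
  have hUTnorm : ∀ x, ‖UT x‖ = ‖P x‖ := by
    intro x
    have h : ⟪UT x, UT x⟫_ℂ = ⟪P x, P x⟫_ℂ := by
      calc ⟪UT x, UT x⟫_ℂ = ⟪(adjoint UT ∘L UT) x, x⟫_ℂ := by
            rw [comp_apply, adjoint_inner_left]
        _ = ⟪P x, x⟫_ℂ := by rw [hQP]
        _ = ⟪P (P x), x⟫_ℂ := by
            rw [show P (P x) = P x from by
              simpa using congrArg (fun S : H →L[ℂ] H => S x) hP2]
        _ = ⟪P x, P x⟫_ℂ := sa_swap P hP (P x) x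
    have h' : ‖UT x‖ ^ 2 = ‖P x‖ ^ 2 := by
      have := congrArg (fun z : ℂ => RCLike.re z) h
      rwa [inner_self_eq_norm_sq, inner_self_eq_norm_sq] at this
    rw [← Real.sqrt_sq (norm_nonneg (UT x)), h', Real.sqrt_sq (norm_nonneg (P x))]
  -- R P = R and P R = R
  have hRP : R ∘L P = R := by
    ext x
    show R (P x) = R x
    have h1 : P (x - P x) = 0 := by
      rw [map_sub, show P (P x) = P x from by
        simpa using congrArg (fun S : H →L[ℂ] H => S x) hP2, sub_self]
    have h2 : T (x - P x) = 0 := by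
      have := LinearMap.mem_ker.mpr h1
      rw [hkerP, LinearMap.mem_ker] at this
      exact this
    have h3 : R (x - P x) = 0 := hkerTR _ h2
    rw [map_sub] at h3
    linear_combination (norm := module) -h3
  have hPR : P ∘L R = R := by
    have := congrArg (fun S : H →L[ℂ] H => adjoint S) hRP
    simpa only [adjoint_comp, isSelfAdjoint_iff'.mp hP, isSelfAdjoint_iff'.mp hRsa] using this
  -- pointwise norm identity for UT - T
  have hVPR : ∀ x, ‖(UT - T) x‖ = ‖(P - R) x‖ := by
    intro x
    have h1 : (UT - T) x = UT (x - R x) := by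
      rw [map_sub, sub_apply, hpolar]
      rfl
    have h2 : P (R x) = R x := congrArg (fun S : H →L[ℂ] H => S x) hPR
    rw [h1, hUTnorm, map_sub, h2, sub_apply]
  have hnormV : ‖UT - T‖ = ‖P - R‖ := by
    apply le_antisymm
    · apply opNorm_le_bound _ (norm_nonneg _)
      intro x
      rw [hVPR x]
      exact le_opNorm _ x
    · apply opNorm_le_bound _ (norm_nonneg _)
      intro x
      rw [← hVPR x]
      exact le_opNorm _ x
  -- the iterate operator is P - R
  have hUTT : adjoint UT ∘L (UT - T) = P - R := by
    have h1 : adjoint UT ∘L T = R := by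
      rw [hpolar, ← comp_assoc, hQP, hPR]
    rw [comp_sub, h1, hQP]
  have hsaPR : IsSelfAdjoint (P - R) := hP.sub hRsa
  -- ‖T‖ = ‖R‖
  have hnormT : ‖T‖ = ‖R‖ := by
    apply le_antisymm
    · apply opNorm_le_bound _ (norm_nonneg _)
      intro x
      rw [← hRT x]
      exact le_opNorm _ x
    · apply opNorm_le_bound _ (norm_nonneg _)
      intro x
      rw [hRT x]
      exact le_opNorm _ x
  -- ‖P x‖ ≤ ‖x‖
  have hPnorm : ∀ x, ‖P x‖ ≤ ‖x‖ := by
    intro x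
    have h : ‖P x‖ ^ 2 = RCLike.re ⟪P x, x⟫_ℂ := by
      rw [← inner_self_eq_norm_sq (𝕜 := ℂ)]
      congr 1
      calc ⟪P x, P x⟫_ℂ = ⟪P (P x), x⟫_ℂ := (sa_swap P hP (P x) x).symm
        _ = ⟪P x, x⟫_ℂ := by
            rw [show P (P x) = P x from by
              simpa using congrArg (fun S : H →L[ℂ] H => S x) hP2]
    have h2 : RCLike.re ⟪P x, x⟫_ℂ ≤ ‖P x‖ * ‖x‖ := by
      calc RCLike.re ⟪P x, x⟫_ℂ ≤ ‖⟪P x, x⟫_ℂ‖ := RCLike.re_le_norm _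
        _ ≤ ‖P x‖ * ‖x‖ := norm_inner_le_norm _ _
    rcases eq_or_lt_of_le (norm_nonneg (P x)) with h0 | h0
    · rw [← h0]; exact norm_nonneg x
    · nlinarith
  tfae_have 1 ↔ 3
  · rw [hUTT, hsaPR.spectralRadius_eq_nnnorm, ← ENNReal.coe_one, ENNReal.coe_lt_coe,
      ← NNReal.coe_lt_coe, coe_nnnorm, NNReal.coe_one]
  tfae_have 2 ↔ 3
  · rw [hnormV]
  tfae_have 3 → 4
  · intro h3
    have hP1 : ‖P‖ ≤ 1 := opNorm_le_bound _ zero_le_one fun x => by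
      simpa using hPnorm x
    have : ‖R‖ ≤ ‖R - P‖ + ‖P‖ := by
      calc ‖R‖ = ‖R - P + P‖ := by rw [sub_add_cancel]
        _ ≤ ‖R - P‖ + ‖P‖ := norm_add_le _ _
    rw [norm_sub_rev] at this
    rw [hnormT]
    linarith
  tfae_have 4 → 3
  · intro h4
    by_cases hR0 : R = 0
    · have hT0 : T = 0 := by rw [hpolar, hR0, comp_zero]
      have hP0 : P = 0 := by
        ext x
        obtain ⟨y, hy⟩ : P x ∈ LinearMap.range ((adjoint T : H →L[ℂ] H) : H →ₗ[ℂ] H) :=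
          hPran ▸ LinearMap.mem_range_self _ _
        rw [← hy, hT0, ← star_eq_adjoint, star_zero]
        rfl
      rw [hP0, hR0, sub_zero, norm_zero]
      norm_num
    · have hRn : 0 < ‖R‖ := norm_pos_iff.mpr hR0
      have hR2' : ‖R‖ < 2 := by rw [← hnormT]; exact h4
      obtain ⟨C, hC0, hC⟩ := bdd_below_of_closed_range T hTcr
      have hPK : ∀ x, P x ∈ (LinearMap.ker (T : H →ₗ[ℂ] H))ᗮ := by
        intro x
        rw [Submodule.mem_orthogonal]
        intro u hu
        have hu' : P u = 0 := by
          change (P : H →ₗ[ℂ] H) u = 0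
          rw [← LinearMap.mem_ker, hkerP]
          exact hu
        rw [← sa_swap P hP, hu', inner_zero_left]
      set δ0 : ℝ := (C ^ 2 * ‖R‖)⁻¹ with hδ0def
      have hδ0 : 0 < δ0 := by positivity
      set δ : ℝ := min δ0 (1/2) with hδdef
      have hδpos : 0 < δ := lt_min hδ0 (by norm_num)
      have hδhalf : δ ≤ 1/2 := min_le_right _ _
      set ε : ℝ := (2 - ‖R‖) * δ with hεdef
      have hε0 : 0 < ε := mul_pos (by linarith) hδpos
      have hε1 : ε ≤ 1 := by
        have h2δ : ε ≤ 2 * δ :=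
          mul_le_mul_of_nonneg_right (by linarith [norm_nonneg R]) hδpos.le
        linarith
      set c : ℝ := Real.sqrt (1 - ε) with hcdef
      have hc0 : 0 ≤ c := Real.sqrt_nonneg _
      have hc2 : c ^ 2 = 1 - ε := Real.sq_sqrt (by linarith)
      have hc1 : c < 1 := by
        have h := Real.sqrt_lt_sqrt (by linarith : (0:ℝ) ≤ 1 - ε) (by linarith : 1 - ε < 1)
        rwa [Real.sqrt_one] at h
      have hbound : ∀ x, ‖(P - R) x‖ ≤ c * ‖x‖ := by
        intro x
        set y := P x with hy
        have hyK : y ∈ (LinearMap.ker (T : H →ₗ[ℂ] H))ᗮ := hPK x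
        have h1 : ‖y‖ ≤ C * ‖R y‖ := by
          rw [hRT]
          exact hC y hyK
        have hs0 : 0 ≤ RCLike.re ⟪R y, y⟫_ℂ := hR.re_inner_nonneg_left y
        -- Cauchy–Schwarz for the positive operator R
        have hq0 : 0 ≤ RCLike.re ⟪R (R y), R y⟫_ℂ := hR.re_inner_nonneg_left (R y)
        have hqb : RCLike.re ⟪R (R y), R y⟫_ℂ ≤ ‖R‖ * ‖R y‖ ^ 2 := by
          calc RCLike.re ⟪R (R y), R y⟫_ℂ ≤ ‖⟪R (R y), R y⟫_ℂ‖ := RCLike.re_le_norm _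
            _ ≤ ‖R (R y)‖ * ‖R y‖ := norm_inner_le_norm _ _
            _ ≤ (‖R‖ * ‖R y‖) * ‖R y‖ :=
                mul_le_mul_of_nonneg_right (le_opNorm R (R y)) (norm_nonneg _)
            _ = ‖R‖ * ‖R y‖ ^ 2 := by ring
        have hquad : ∀ t : ℝ, 0 ≤ RCLike.re ⟪R (R y), R y⟫_ℂ + 2 * t * ‖R y‖ ^ 2
            + t ^ 2 * RCLike.re ⟪R y, y⟫_ℂ := by
          intro t
          have h : 0 ≤ RCLike.re ⟪R (R y + (t : ℂ) • y), R y + (t : ℂ) • y⟫_ℂ :=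
            hR.re_inner_nonneg_left (R y + (t : ℂ) • y)
          have hexp : ⟪R (R y + (t : ℂ) • y), R y + (t : ℂ) • y⟫_ℂ
              = ⟪R (R y), R y⟫_ℂ + ((t : ℝ) : ℂ) * ⟪R (R y), y⟫_ℂ
                + ((t : ℝ) : ℂ) * ⟪R y, R y⟫_ℂ + (((t ^ 2 : ℝ)) : ℂ) * ⟪R y, y⟫_ℂ := by
            rw [map_add, map_smul]
            simp only [inner_add_left, inner_add_right, inner_smul_left, inner_smul_right,
              Complex.conj_ofReal]
            push_cast
            ring
          rw [hexp] at h
          have hswapRy : ⟪R (R y), y⟫_ℂ = ⟪R y, R y⟫_ℂ := sa_swap R hRsa (R y) y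
          rw [hswapRy] at h
          have hnormRy : RCLike.re ⟪R y, R y⟫_ℂ = ‖R y‖ ^ 2 := inner_self_eq_norm_sq _
          simp only [RCLike.re_to_complex, Complex.add_re, Complex.re_ofReal_mul]
            at h hnormRy ⊢
          rw [hnormRy] at h
          linarith
        have h2 : ‖R y‖ ^ 2 ≤ ‖R‖ * RCLike.re ⟪R y, y⟫_ℂ := by
          have h := hquad (-‖R‖)
          nlinarith [hqb, hRn]
        have hs : δ * ‖y‖ ^ 2 ≤ RCLike.re ⟪R y, y⟫_ℂ := by
          have hA : ‖y‖ ^ 2 ≤ C ^ 2 * ‖R y‖ ^ 2 := by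
            nlinarith [norm_nonneg (R y), norm_nonneg y]
          have hB : ‖y‖ ^ 2 ≤ (C ^ 2 * ‖R‖) * RCLike.re ⟪R y, y⟫_ℂ := by
            nlinarith [sq_nonneg C]
          have hδle : δ ≤ δ0 := min_le_left _ _
          have hD : δ0 * ‖y‖ ^ 2 ≤ RCLike.re ⟪R y, y⟫_ℂ := by
            rw [hδ0def, inv_mul_le_iff₀ (by positivity)]
            linarith
          nlinarith [sq_nonneg ‖y‖]
        have hexp2 : ‖y - R y‖ ^ 2
            = ‖y‖ ^ 2 - 2 * RCLike.re ⟪R y, y⟫_ℂ + ‖R y‖ ^ 2 := by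
          rw [norm_sub_sq (𝕜 := ℂ), inner_re_symm]
        have hfin : ‖y - R y‖ ^ 2 ≤ c ^ 2 * ‖y‖ ^ 2 := by
          rw [hc2]
          have hmul := mul_le_mul_of_nonneg_left hs (by linarith : (0:ℝ) ≤ 2 - ‖R‖)
          nlinarith [h2]
        have hyx : ‖y‖ ≤ ‖x‖ := hPnorm x
        have hPRx : (P - R) x = y - R y := by
          rw [sub_apply]
          congr 1
          exact (congrArg (fun S : H →L[ℂ] H => S x) hRP).symm
        rw [hPRx]
        have hsq : ‖y - R y‖ ^ 2 ≤ (c * ‖x‖) ^ 2 := by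
          have hy2 : ‖y‖ ^ 2 ≤ ‖x‖ ^ 2 := by nlinarith [norm_nonneg y]
          have hmm : c ^ 2 * ‖y‖ ^ 2 ≤ c ^ 2 * ‖x‖ ^ 2 :=
            mul_le_mul_of_nonneg_left hy2 (sq_nonneg c)
          rw [mul_pow]
          linarith
        calc ‖y - R y‖ = Real.sqrt (‖y - R y‖ ^ 2) :=
              (Real.sqrt_sq (norm_nonneg _)).symm
          _ ≤ Real.sqrt ((c * ‖x‖) ^ 2) := Real.sqrt_le_sqrt hsq
          _ = c * ‖x‖ := Real.sqrt_sq (by positivity)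
      exact lt_of_le_of_lt (opNorm_le_bound _ hc0 hbound) hc1
  tfae_finish
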